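/- Let A be a good bounded pseudo-hoop and F a filter of A. Then F is involutive if and only if for all x, y ∈ A: (y^- ⇝ x^-) → (x → y) ∈ F and (y^∼ → x^∼) ⇝ (x ⇝ y) ∈ F. -/
import Mathlib


universe u v

class PseudoHoop (A : Type u) extends One A, Mul A where
  rimp : A → A → A
  limp : A → A → A
  mul_one' : ∀ x : A, x * 1 = x
  one_mul' : ∀ x : A, 1 * x = x
  rimp_self : ∀ x : A, rimp x x = 1
  limp_self : ∀ x : A, limp x x = 1
  mul_rimp : ∀ x y z : A, rimp (x * y) z = rimp x (rimp y z)
  mul_limp : ∀ x y z : A, limp (x * y) z = limp y (limp x z)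
  div₁ : ∀ x y : A, (rimp x y) * x = (rimp y x) * y
  div₂ : ∀ x y : A, (rimp x y) * x = x * (limp x y)
  div₃ : ∀ x y : A, x * (limp x y) = y * (limp y x)

namespace PseudoHoop

/-- The order on a pseudo-hoop: `x ≤ y` iff `x → y = 1`. -/
def ple {A : Type u} [PseudoHoop A] (x y : A) : Prop := rimp x y = 1

/-- The meet `x ∧ y = (x → y) ⊙ x`. -/
def meet {A : Type u} [PseudoHoop A] (x y : A) : A := (rimp x y) * x

/-- `x ∨₁ y = (x → y) ⇝ y`. -/
def join₁ {A : Type u} [PseudoHoop A] (x y : A) : A := limp (rimp x y) y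

/-- `x ∨₂ y = (x ⇝ y) → y`. -/
def join₂ {A : Type u} [PseudoHoop A] (x y : A) : A := rimp (limp x y) y

/-- Iterated implication: `x →⁰ y = y`, `x →ⁿ⁺¹ y = x → (x →ⁿ y)`. -/
def rimpPow {A : Type u} [PseudoHoop A] (x : A) : ℕ → A → A
  | 0, y => y
  | n + 1, y => rimp x (rimpPow x n y)

/-- A filter of a pseudo-hoop. -/
structure IsFilter {A : Type u} [PseudoHoop A] (F : Set A) : Prop where
  nonempty : F.Nonempty
  mul_mem : ∀ {x y : A}, x ∈ F → y ∈ F → x * y ∈ F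
  upward : ∀ {x y : A}, x ∈ F → ple x y → y ∈ F

/-- A normal filter: `x → y ∈ F` iff `x ⇝ y ∈ F`. -/
def IsNormalFilter {A : Type u} [PseudoHoop A] (F : Set A) : Prop :=
  IsFilter F ∧ ∀ x y : A, rimp x y ∈ F ↔ limp x y ∈ F

def IsProper {A : Type u} [PseudoHoop A] (F : Set A) : Prop := F ≠ Set.univ

/-- A pseudo-hoop is simple if `{1}` is its unique proper filter. -/
def IsSimple (A : Type u) [PseudoHoop A] : Prop :=
  ∀ F : Set A, IsFilter F → IsProper F → F = {1}

/-- A pseudo-hoop is Wajsberg if `x ∨₁ y = y ∨₁ x` and `x ∨₂ y = y ∨₂ x`. -/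
def IsWajsberg (A : Type u) [PseudoHoop A] : Prop :=
  ∀ x y : A, join₁ x y = join₁ y x ∧ join₂ x y = join₂ y x

/-- A fantastic filter. -/
def IsFantasticFilter {A : Type u} [PseudoHoop A] (F : Set A) : Prop :=
  IsFilter F ∧ ∀ x y : A,
    (rimp y x ∈ F → rimp (join₁ x y) x ∈ F) ∧
    (limp y x ∈ F → limp (join₂ x y) x ∈ F)

def IS₂ {A : Type u} [PseudoHoop A] (μ : A → A) : Prop :=
  ∀ x y : A, μ (x * y) = μ x * μ (limp x (x * y)) ∧
    μ (x * y) = μ (rimp y (x * y)) * μ y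

def IS₃ {A : Type u} [PseudoHoop A] (μ : A → A) : Prop :=
  ∀ x y : A, μ (μ x * μ y) = μ x * μ y

def IS₄ {A : Type u} [PseudoHoop A] (μ : A → A) : Prop :=
  ∀ x y : A, μ (rimp (μ x) (μ y)) = rimp (μ x) (μ y) ∧
    μ (limp (μ x) (μ y)) = limp (μ x) (μ y)

/-- Type I state operator. -/
def IsStateI {A : Type u} [PseudoHoop A] (μ : A → A) : Prop :=
  (∀ x y : A, μ (rimp x y) = rimp (μ (join₁ x y)) (μ y) ∧
      μ (limp x y) = limp (μ (join₂ x y)) (μ y)) ∧ IS₂ μ ∧ IS₃ μ ∧ IS₄ μ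

/-- Type II state operator. -/
def IsStateII {A : Type u} [PseudoHoop A] (μ : A → A) : Prop :=
  (∀ x y : A, μ (rimp x y) = rimp (μ (join₁ y x)) (μ y) ∧
      μ (limp x y) = limp (μ (join₂ y x)) (μ y)) ∧ IS₂ μ ∧ IS₃ μ ∧ IS₄ μ

/-- Type III state operator. -/
def IsStateIII {A : Type u} [PseudoHoop A] (μ : A → A) : Prop :=
  (∀ x y : A, μ (rimp x y) = rimp (μ x) (μ (meet x y)) ∧
      μ (limp x y) = limp (μ x) (μ (meet x y))) ∧ IS₂ μ ∧ IS₃ μ ∧ IS₄ μ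

end PseudoHoop

open PseudoHoop

/-- A bounded pseudo-hoop: a pseudo-hoop with a least element `0`. -/
class BoundedPseudoHoop (A : Type u) extends PseudoHoop A, Zero A where
  zero_le : ∀ x : A, rimp 0 x = 1

namespace BoundedPseudoHoop

/-- `x⁻ = x → 0`. -/
def negr {A : Type u} [BoundedPseudoHoop A] (x : A) : A := rimp x 0

/-- `x∼ = x ⇝ 0`. -/
def negl {A : Type u} [BoundedPseudoHoop A] (x : A) : A := limp x 0

/-- A bounded pseudo-hoop is good if `x⁻∼ = x∼⁻` for all `x`. -/
def IsGood (A : Type u) [BoundedPseudoHoop A] : Prop :=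
  ∀ x : A, negl (negr x) = negr (negl x)

/-- A bounded pseudo-hoop is involutive if `x⁻∼ = x∼⁻ = x` for all `x`. -/
def IsInvolutive (A : Type u) [BoundedPseudoHoop A] : Prop :=
  ∀ x : A, negl (negr x) = x ∧ negr (negl x) = x

/-- The set of dense elements. -/
def Den (A : Type u) [BoundedPseudoHoop A] : Set A :=
  {x : A | negl (negr x) = 1}

/-- An involutive filter: `x⁻∼ → x ∈ F` and `x∼⁻ ⇝ x ∈ F` for all `x`. -/
def IsInvolutiveFilter {A : Type u} [BoundedPseudoHoop A] (F : Set A) : Prop :=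
  IsFilter F ∧ ∀ x : A, rimp (negl (negr x)) x ∈ F ∧ limp (negr (negl x)) x ∈ F

end BoundedPseudoHoop

open BoundedPseudoHoop

section Aux

variable {A : Type u} [BoundedPseudoHoop A]

lemma hp_l_of_r {x y : A} (h : rimp x y = 1) : limp x y = 1 := by
  have h2 := PseudoHoop.div₂ x y
  rw [h, PseudoHoop.one_mul'] at h2
  have h3 := PseudoHoop.mul_limp x (limp x y) y
  rw [← h2] at h3
  rw [h3, PseudoHoop.limp_self]

lemma hp_r_of_l {x y : A} (h : limp x y = 1) : rimp x y = 1 := by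
  have h2 := PseudoHoop.div₂ x y
  rw [h, PseudoHoop.mul_one'] at h2
  have h3 := PseudoHoop.mul_rimp (rimp x y) x y
  rw [h2] at h3
  rw [h3, PseudoHoop.rimp_self]

lemma hp_limp_zero (x : A) : limp 0 x = 1 := hp_l_of_r (BoundedPseudoHoop.zero_le x)

lemma hp_rimp_one (x : A) : rimp x 1 = 1 := by
  have h1 : limp ((x : A) * 0) 0 = 1 := by
    rw [PseudoHoop.mul_limp, hp_limp_zero]
  have h2 := hp_r_of_l h1
  rw [PseudoHoop.mul_rimp, PseudoHoop.rimp_self] at h2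
  exact h2

lemma hp_limp_one (x : A) : limp x 1 = 1 := hp_l_of_r (hp_rimp_one x)

lemma hp_one_rimp (x : A) : rimp 1 x = x := by
  have h := PseudoHoop.div₁ (1 : A) x
  rw [hp_rimp_one, PseudoHoop.one_mul', PseudoHoop.mul_one'] at h
  exact h

lemma hp_one_limp (x : A) : limp 1 x = x := by
  have h := PseudoHoop.div₃ (1 : A) x
  rw [hp_limp_one, PseudoHoop.one_mul', PseudoHoop.mul_one'] at h
  exact h

lemma hp_antisymm {x y : A} (h1 : rimp x y = 1) (h2 : rimp y x = 1) : x = y := by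
  have h := PseudoHoop.div₁ x y
  rw [h1, h2, PseudoHoop.one_mul', PseudoHoop.one_mul'] at h
  exact h

lemma hp_trans {x y z : A} (h1 : rimp x y = 1) (h2 : rimp y z = 1) : rimp x z = 1 := by
  have h := PseudoHoop.div₁ x y
  rw [h1, PseudoHoop.one_mul'] at h
  rw [h, PseudoHoop.mul_rimp, h2, hp_rimp_one]

lemma hp_mul_assoc (a b c : A) : a * b * c = a * (b * c) := by
  have key : ∀ z : A, rimp (a * b * c) z = rimp (a * (b * c)) z := by
    intro z
    simp only [PseudoHoop.mul_rimp]
  apply hp_antisymm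
  · rw [key, PseudoHoop.rimp_self]
  · rw [← key, PseudoHoop.rimp_self]

lemma hp_rimp_mul_le (x y : A) : rimp (rimp x y * x) y = 1 := by
  rw [PseudoHoop.mul_rimp, PseudoHoop.rimp_self]

lemma hp_limp_mul_le (x y : A) : limp (x * limp x y) y = 1 := by
  rw [PseudoHoop.mul_limp, PseudoHoop.limp_self]

lemma hp_mul_mono_right {b c : A} (a : A) (h : rimp b c = 1) :
    rimp (a * b) (a * c) = 1 := by
  apply hp_r_of_l
  rw [PseudoHoop.mul_limp]
  apply hp_l_of_r
  apply hp_trans h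
  apply hp_r_of_l
  have := PseudoHoop.mul_limp a c (a * c)
  rw [PseudoHoop.limp_self] at this
  exact this.symm

lemma hp_mul_mono_left {a b : A} (c : A) (h : rimp a b = 1) :
    rimp (a * c) (b * c) = 1 := by
  rw [PseudoHoop.mul_rimp]
  apply hp_trans h
  have := PseudoHoop.mul_rimp b c (b * c)
  rw [PseudoHoop.rimp_self] at this
  exact this.symm

lemma hp_exchange (a b c : A) : rimp a (limp b c) = limp b (rimp a c) := by
  apply hp_antisymm
  · apply hp_r_of_l
    rw [show limp (rimp a (limp b c)) (limp b (rimp a c))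
        = limp (b * rimp a (limp b c)) (rimp a c) from
      (PseudoHoop.mul_limp b _ _).symm]
    apply hp_l_of_r
    rw [← PseudoHoop.mul_rimp, hp_mul_assoc]
    apply hp_trans (hp_mul_mono_right b (hp_rimp_mul_le a (limp b c)))
    exact hp_r_of_l (hp_limp_mul_le b c)
  · have e : rimp (limp b (rimp a c)) (rimp a (limp b c))
        = rimp (limp b (rimp a c) * a) (limp b c) := by
      rw [PseudoHoop.mul_rimp]
    rw [e]
    apply hp_r_of_l
    rw [← PseudoHoop.mul_limp, ← hp_mul_assoc]
    apply hp_l_of_r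
    apply hp_trans (hp_mul_mono_left a (hp_r_of_l (hp_limp_mul_le b (rimp a c))))
    exact hp_rimp_mul_le a c

lemma hp_le_negl_negr (x : A) : rimp x (negl (negr x)) = 1 := by
  show rimp x (limp (rimp x 0) 0) = 1
  rw [hp_exchange, PseudoHoop.limp_self]

lemma hp_mul_negl (x : A) : x * limp x 0 = 0 := by
  have h1 := PseudoHoop.div₂ x 0
  have h2 := PseudoHoop.div₁ x 0
  rw [BoundedPseudoHoop.zero_le, PseudoHoop.one_mul'] at h2
  rw [h2] at h1
  exact h1.symm

lemma hp_le_negr_negl (x : A) : rimp x (negr (negl x)) = 1 := by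
  show rimp x (rimp (limp x 0) 0) = 1
  rw [← PseudoHoop.mul_rimp, hp_mul_negl, PseudoHoop.rimp_self]

lemma hp_negr_antitone {a b : A} (h : rimp a b = 1) : rimp (negr b) (negr a) = 1 := by
  show rimp (rimp b 0) (rimp a 0) = 1
  rw [← PseudoHoop.mul_rimp]
  apply hp_trans (hp_mul_mono_right _ h)
  exact hp_rimp_mul_le b 0

lemma hp_negl_antitone {a b : A} (h : rimp a b = 1) : rimp (negl b) (negl a) = 1 := by
  show rimp (limp b 0) (limp a 0) = 1
  apply hp_r_of_l
  rw [← PseudoHoop.mul_limp]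
  apply hp_l_of_r
  apply hp_trans (hp_mul_mono_left _ h)
  exact hp_r_of_l (hp_limp_mul_le b 0)

lemma hp_negr3 (x : A) : negr (negl (negr x)) = negr x :=
  hp_antisymm (hp_negr_antitone (hp_le_negl_negr x)) (hp_le_negr_negl (negr x))

lemma hp_negl3 (x : A) : negl (negr (negl x)) = negl x :=
  hp_antisymm (hp_negl_antitone (hp_le_negr_negl x)) (hp_le_negl_negr (negl x))

end Aux

theorem stmt13 {A : Type u} [BoundedPseudoHoop A] (hg : IsGood A)
    (F : Set A) (hF : IsFilter F) :
    IsInvolutiveFilter F ↔ ∀ x y : A,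
      rimp (limp (negr y) (negr x)) (rimp x y) ∈ F ∧
      limp (rimp (negl y) (negl x)) (limp x y) ∈ F := by
  constructor
  · rintro ⟨-, hinv⟩ x y
    constructor
    · -- first component
      have e1 : limp (negr y) (negr x) = rimp x (negl (negr y)) :=
        (hp_exchange x (negr y) 0).symm
      rw [e1]
      set d := negl (negr y) with hd
      refine hF.upward (hinv y).1 ?_
      show rimp (rimp d y) (rimp (rimp x d) (rimp x y)) = 1
      rw [← PseudoHoop.mul_rimp, ← PseudoHoop.mul_rimp, hp_mul_assoc]
      exact hp_trans (hp_mul_mono_right _ (hp_rimp_mul_le x d)) (hp_rimp_mul_le d y)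
    · -- second component
      have e2 : rimp (negl y) (negl x) = limp x (negr (negl y)) :=
        hp_exchange (negl y) x 0
      rw [e2]
      set e := negr (negl y) with he
      refine hF.upward (hinv y).2 ?_
      show rimp (limp e y) (limp (limp x e) (limp x y)) = 1
      apply hp_r_of_l
      rw [← PseudoHoop.mul_limp, ← PseudoHoop.mul_limp, ← hp_mul_assoc]
      apply hp_l_of_r
      exact hp_trans (hp_mul_mono_left _ (hp_r_of_l (hp_limp_mul_le x e)))
        (hp_r_of_l (hp_limp_mul_le e y))
  · intro h
    refine ⟨hF, fun x => ⟨?_, ?_⟩⟩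
    · have h1 := (h (negl (negr x)) x).1
      rw [hp_negr3, PseudoHoop.limp_self, hp_one_rimp] at h1
      exact h1
    · have h2 := (h (negr (negl x)) x).2
      rw [hp_negl3, PseudoHoop.rimp_self, hp_one_limp] at h2
      exact h2
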